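/- Let (N, ∘_λ) be a commutative associative conformal superalgebra and let D be an even derivation of (N, ∘_λ). Define a ∗_λ b := a ∘_λ D(b) for a, b ∈ N. Then (N, ∗_λ) is a Novikov conformal superalgebra and (N, ∘_λ, ∗_λ) is a Novikov–Poisson conformal superalgebra. -/

import Mathlib

open Polynomial
open scoped TensorProduct

noncomputable section

namespace TPCSAFormal

/-- The super-sign `(-1)^{i·j}` for parities `i, j ∈ ℤ/2ℤ`. -/
def sgn (i j : ZMod 2) : ℂ := (-1 : ℂ) ^ (i.val * j.val)

variable (L : Type*) [AddCommGroup L] [Module ℂ L]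
  [Module (Polynomial ℂ) L] [IsScalarTower ℂ (Polynomial ℂ) L]

/-- A conformal `λ`-product on the `ℂ[∂]`-module `L`, recorded by its family of `n`-th
product coefficients: `a ∘_λ b = ∑_n λ^n • coeff n a b`, with finitely many nonzero terms.
This is exactly the data of a `ℂ`-bilinear map `L ⊗ L → ℂ[λ] ⊗ L`. -/
structure ConformalProduct where
  coeff : ℕ → L →ₗ[ℂ] L →ₗ[ℂ] L
  coeff_finite : ∀ a b : L, ∃ N : ℕ, ∀ n : ℕ, N ≤ n → coeff n a b = 0

variable {L}

/-- The value `a ∘_λ b` of the `λ`-product at `λ ∈ ℂ`.  Since `ℂ` is infinite, identities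
between such values for all `λ` are equivalent to the corresponding polynomial identities. -/
def ConformalProduct.mul (m : ConformalProduct L) (lam : ℂ) (a b : L) : L :=
  ∑ᶠ n : ℕ, lam ^ n • m.coeff n a b

/-- The value `a ∘_{-∂-λ} b`, where `∂` acts on `L` as scalar multiplication by
`X ∈ ℂ[∂]` (the variable `λ` being replaced by the operator `-∂-λ`). -/
def ConformalProduct.cmul (m : ConformalProduct L) (lam : ℂ) (a b : L) : L :=
  ∑ᶠ n : ℕ, ((-((X : Polynomial ℂ) + C lam)) ^ n) • m.coeff n a b

variable (L) in
/-- A `ℤ₂`-grading on `L` making it a `ℤ₂`-graded `ℂ[∂]`-module: `L = L₀ ⊕ L₁` with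
`∂ L_i ⊆ L_i`, where `∂` acts as multiplication by `X ∈ ℂ[∂]`. -/
structure SuperModule where
  grade : ZMod 2 → Submodule ℂ L
  isInternal : DirectSum.IsInternal grade
  X_smul_mem : ∀ (i : ZMod 2) (a : L), a ∈ grade i → (X : Polynomial ℂ) • a ∈ grade i

/-- `m` is an even `λ`-product on the `ℤ₂`-graded `ℂ[∂]`-module `(L, S)`:
it is even with respect to the grading and conformally sesquilinear. -/
structure IsLambdaProduct (S : SuperModule L) (m : ConformalProduct L) : Prop where
  even : ∀ (i j : ZMod 2) (a b : L), a ∈ S.grade i → b ∈ S.grade j →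
    ∀ n : ℕ, m.coeff n a b ∈ S.grade (i + j)
  sesq_left : ∀ (lam : ℂ) (a b : L),
    m.mul lam ((X : Polynomial ℂ) • a) b = (-lam) • m.mul lam a b
  sesq_right : ∀ (lam : ℂ) (a b : L),
    m.mul lam a ((X : Polynomial ℂ) • b) =
      (X : Polynomial ℂ) • m.mul lam a b + lam • m.mul lam a b

/-- `(L, S, m)` is a commutative associative conformal superalgebra. -/
structure IsCommAssoc (S : SuperModule L) (m : ConformalProduct L)
    extends IsLambdaProduct S m : Prop where
  comm : ∀ (i j : ZMod 2) (a b : L), a ∈ S.grade i → b ∈ S.grade j →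
    ∀ lam : ℂ, m.mul lam a b = sgn i j • m.cmul lam b a
  assoc : ∀ (lam mu : ℂ) (a b c : L),
    m.mul lam a (m.mul mu b c) = m.mul (lam + mu) (m.mul lam a b) c

/-- `(L, S, br)` is a Lie conformal superalgebra. -/
structure IsLie (S : SuperModule L) (br : ConformalProduct L)
    extends IsLambdaProduct S br : Prop where
  skew : ∀ (i j : ZMod 2) (a b : L), a ∈ S.grade i → b ∈ S.grade j →
    ∀ lam : ℂ, br.mul lam a b = -(sgn i j • br.cmul lam b a)
  jacobi : ∀ (i j : ZMod 2) (a b : L), a ∈ S.grade i → b ∈ S.grade j →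
    ∀ (c : L) (lam mu : ℂ),
      br.mul lam a (br.mul mu b c) =
        br.mul (lam + mu) (br.mul lam a b) c + sgn i j • br.mul mu b (br.mul lam a c)

/-- `(L, S, m, br)` is a transposed Poisson conformal superalgebra. -/
structure IsTPCSA (S : SuperModule L) (m br : ConformalProduct L) : Prop where
  commAssoc : IsCommAssoc S m
  lie : IsLie S br
  transposedLeibniz : ∀ (i j : ZMod 2) (a b : L), a ∈ S.grade i → b ∈ S.grade j →
    ∀ (c : L) (lam mu : ℂ),
      (2 : ℂ) • m.mul lam a (br.mul mu b c) =
        br.mul (lam + mu) (m.mul lam a b) c + sgn i j • br.mul mu b (m.mul lam a c)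

/-- `(L, S, m, br)` is a Poisson conformal superalgebra. -/
structure IsPCSA (S : SuperModule L) (m br : ConformalProduct L) : Prop where
  commAssoc : IsCommAssoc S m
  lie : IsLie S br
  leibniz : ∀ (i j : ZMod 2) (a b : L), a ∈ S.grade i → b ∈ S.grade j →
    ∀ (c : L) (lam mu : ℂ),
      br.mul lam a (m.mul mu b c) =
        m.mul (lam + mu) (br.mul lam a b) c + sgn i j • m.mul mu b (br.mul lam a c)

/-- `(L, S, br, α)` is a Hom-Lie conformal superalgebra. -/
structure IsHomLie (S : SuperModule L) (br : ConformalProduct L) (α : L → L)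
    extends IsLambdaProduct S br : Prop where
  map_smul_add : ∀ (c : ℂ) (a b : L), α (c • a + b) = c • α a + α b
  map_grade : ∀ (i : ZMod 2) (a : L), a ∈ S.grade i → α a ∈ S.grade i
  commute_partial : ∀ a : L, α ((X : Polynomial ℂ) • a) = (X : Polynomial ℂ) • α a
  skew : ∀ (i j : ZMod 2) (a b : L), a ∈ S.grade i → b ∈ S.grade j →
    ∀ lam : ℂ, br.mul lam a b = -(sgn i j • br.cmul lam b a)
  homJacobi : ∀ (i j : ZMod 2) (a b : L), a ∈ S.grade i → b ∈ S.grade j →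
    ∀ (c : L) (lam mu : ℂ),
      br.mul lam (α a) (br.mul mu b c) =
        br.mul (lam + mu) (br.mul lam a b) (α c) + sgn i j • br.mul mu (α b) (br.mul lam a c)

/-- `(L, S, p)` is a left-symmetric conformal superalgebra. -/
structure IsLeftSymmetric (S : SuperModule L) (p : ConformalProduct L)
    extends IsLambdaProduct S p : Prop where
  leftSym : ∀ (i j : ZMod 2) (a b : L), a ∈ S.grade i → b ∈ S.grade j →
    ∀ (c : L) (lam mu : ℂ),
      p.mul (lam + mu) (p.mul lam a b) c - p.mul lam a (p.mul mu b c) =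
        sgn i j • (p.mul (lam + mu) (p.mul mu b a) c - p.mul mu b (p.mul lam a c))

/-- `(L, S, p)` is a (left) Novikov conformal superalgebra. -/
structure IsNovikov (S : SuperModule L) (p : ConformalProduct L)
    extends IsLeftSymmetric S p : Prop where
  novikov : ∀ (j k : ZMod 2) (b c : L), b ∈ S.grade j → c ∈ S.grade k →
    ∀ (a : L) (lam mu : ℂ),
      p.mul (lam + mu) (p.mul lam a b) c = sgn j k • p.cmul mu (p.mul lam a c) b

/-- `(L, S, mc, p)` is a Novikov-Poisson conformal superalgebra. -/
structure IsNovikovPoisson (S : SuperModule L) (mc p : ConformalProduct L) : Prop where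
  commAssoc : IsCommAssoc S mc
  novikov : IsNovikov S p
  compat₁ : ∀ (lam mu : ℂ) (a b c : L),
    p.mul (lam + mu) (mc.mul lam a b) c = mc.mul lam a (p.mul mu b c)
  compat₂ : ∀ (i j : ZMod 2) (a b : L), a ∈ S.grade i → b ∈ S.grade j →
    ∀ (c : L) (lam mu : ℂ),
      mc.mul (lam + mu) (p.mul lam a b) c - p.mul lam a (mc.mul mu b c) =
        sgn i j • (mc.mul (lam + mu) (p.mul mu b a) c - p.mul mu b (mc.mul lam a c))

/-- `(L, S, mc, p)` is a pre-Lie commutative conformal superalgebra. -/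
structure IsPreLieComm (S : SuperModule L) (mc p : ConformalProduct L) : Prop where
  commAssoc : IsCommAssoc S mc
  leftSymmetric : IsLeftSymmetric S p
  compat : ∀ (i j : ZMod 2) (a b : L), a ∈ S.grade i → b ∈ S.grade j →
    ∀ (c : L) (lam mu : ℂ),
      p.mul lam a (mc.mul mu b c) =
        mc.mul (lam + mu) (p.mul lam a b) c + sgn i j • mc.mul mu b (p.mul lam a c)

/-- `(L, S, mc, p)` is a pre-Lie Poisson conformal superalgebra. -/
structure IsPreLiePoisson (S : SuperModule L) (mc p : ConformalProduct L) : Prop where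
  commAssoc : IsCommAssoc S mc
  leftSymmetric : IsLeftSymmetric S p
  compat₁ : ∀ (lam mu : ℂ) (a b c : L),
    p.mul (lam + mu) (mc.mul lam a b) c = mc.mul lam a (p.mul mu b c)
  compat₂ : ∀ (i j : ZMod 2) (a b : L), a ∈ S.grade i → b ∈ S.grade j →
    ∀ (c : L) (lam mu : ℂ),
      mc.mul (lam + mu) (p.mul lam a b) c - p.mul lam a (mc.mul mu b c) =
        sgn i j • (mc.mul (lam + mu) (p.mul mu b a) c - p.mul mu b (mc.mul lam a c))


/-! ### Auxiliary lemmas -/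

section Aux

lemma smul_support_finite (m : ConformalProduct L) (a b : L)
    {R : Type*} [Semiring R] [Module R L] (g : ℕ → R) :
    (Function.support fun n => g n • m.coeff n a b).Finite := by
  obtain ⟨N, hN⟩ := m.coeff_finite a b
  apply Set.Finite.subset (Set.finite_Iio N)
  intro n hn
  simp only [Function.mem_support] at hn
  by_contra h
  simp only [Set.mem_Iio, not_lt] at h
  exact hn (by rw [hN n h, smul_zero])

lemma mul_eq_sum (m : ConformalProduct L) {a b : L} {N : ℕ}
    (hN : ∀ n, N ≤ n → m.coeff n a b = 0) (lam : ℂ) :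
    m.mul lam a b = ∑ n ∈ Finset.range N, lam ^ n • m.coeff n a b := by
  apply finsum_eq_sum_of_support_subset
  intro n hn
  simp only [Function.mem_support] at hn
  simp only [Finset.coe_range, Set.mem_Iio]
  by_contra h
  exact hn (by rw [hN n (le_of_not_gt h), smul_zero])

lemma cmul_eq_sum (m : ConformalProduct L) {a b : L} {N : ℕ}
    (hN : ∀ n, N ≤ n → m.coeff n a b = 0) (lam : ℂ) :
    m.cmul lam a b =
      ∑ n ∈ Finset.range N, ((-((X : Polynomial ℂ) + C lam)) ^ n) • m.coeff n a b := by
  apply finsum_eq_sum_of_support_subset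
  intro n hn
  simp only [Function.mem_support] at hn
  simp only [Finset.coe_range, Set.mem_Iio]
  by_contra h
  exact hn (by rw [hN n (le_of_not_gt h), smul_zero])

/-- `a ↦ a ∘_λ b` as a `ℂ`-linear map. -/
def mulL (m : ConformalProduct L) (lam : ℂ) (b : L) : L →ₗ[ℂ] L where
  toFun a := m.mul lam a b
  map_add' a a' := by
    unfold ConformalProduct.mul
    rw [← finsum_add_distrib (smul_support_finite m a b _) (smul_support_finite m a' b _)]
    exact finsum_congr fun n => by
      rw [map_add, LinearMap.add_apply, smul_add]
  map_smul' r a := by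
    unfold ConformalProduct.mul
    simp only [RingHom.id_apply, smul_finsum]
    exact finsum_congr fun n => by
      rw [map_smul, LinearMap.smul_apply, smul_comm]

/-- `b ↦ a ∘_λ b` as a `ℂ`-linear map. -/
def mulR (m : ConformalProduct L) (lam : ℂ) (a : L) : L →ₗ[ℂ] L where
  toFun b := m.mul lam a b
  map_add' b b' := by
    unfold ConformalProduct.mul
    rw [← finsum_add_distrib (smul_support_finite m a b _) (smul_support_finite m a b' _)]
    exact finsum_congr fun n => by rw [map_add, smul_add]
  map_smul' r b := by
    unfold ConformalProduct.mul
    simp only [RingHom.id_apply, smul_finsum]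
    exact finsum_congr fun n => by rw [map_smul, smul_comm]

/-- `a ↦ a ∘_{-∂-λ} b` as a `ℂ`-linear map. -/
def cmulL (m : ConformalProduct L) (lam : ℂ) (b : L) : L →ₗ[ℂ] L where
  toFun a := m.cmul lam a b
  map_add' a a' := by
    unfold ConformalProduct.cmul
    rw [← finsum_add_distrib (smul_support_finite m a b _) (smul_support_finite m a' b _)]
    exact finsum_congr fun n => by
      rw [map_add, LinearMap.add_apply, smul_add]
  map_smul' r a := by
    unfold ConformalProduct.cmul
    simp only [RingHom.id_apply, smul_finsum]
    exact finsum_congr fun n => by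
      rw [map_smul, LinearMap.smul_apply, smul_comm]

lemma mulL_apply (m : ConformalProduct L) (lam : ℂ) (b a : L) :
    mulL m lam b a = m.mul lam a b := rfl

lemma mulR_apply (m : ConformalProduct L) (lam : ℂ) (a b : L) :
    mulR m lam a b = m.mul lam a b := rfl

lemma cmulL_apply (m : ConformalProduct L) (lam : ℂ) (b a : L) :
    cmulL m lam b a = m.cmul lam a b := rfl

/-- Sesquilinearity in the first slot for an arbitrary polynomial scalar. -/
lemma mul_poly_smul (m : ConformalProduct L)
    (hs : ∀ (lam : ℂ) (a b : L),
      m.mul lam ((X : Polynomial ℂ) • a) b = (-lam) • m.mul lam a b)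
    (p : Polynomial ℂ) (lam : ℂ) (a b : L) :
    m.mul lam (p • a) b = p.eval (-lam) • m.mul lam a b := by
  induction p using Polynomial.induction_on with
  | C r =>
      rw [show (C r : Polynomial ℂ) • a = r • a from by
          rw [← Polynomial.algebraMap_eq]; exact algebraMap_smul _ r a,
        eval_C, ← mulL_apply, ← mulL_apply, map_smul]
  | add p q hp hq =>
      rw [add_smul, ← mulL_apply, map_add, mulL_apply, mulL_apply, hp, hq, eval_add, add_smul]
  | monomial n r h =>
      have h1 : (C r * X ^ (n + 1)) • a = (X : Polynomial ℂ) • ((C r * X ^ n) • a) := by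
        rw [← mul_smul]; ring_nf
      rw [h1, hs, h, smul_smul]
      congr 1
      simp [pow_succ]
      ring

/-- Key lemma: `(a ∘_{-∂-λ} b) ∘_{λ+μ} c = (a ∘_μ b) ∘_{λ+μ} c`. -/
lemma mul_cmul (m : ConformalProduct L)
    (hs : ∀ (lam : ℂ) (a b : L),
      m.mul lam ((X : Polynomial ℂ) • a) b = (-lam) • m.mul lam a b)
    (lam mu : ℂ) (x y c : L) :
    m.mul (lam + mu) (m.cmul lam x y) c = m.mul (lam + mu) (m.mul mu x y) c := by
  obtain ⟨N, hN⟩ := m.coeff_finite x y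
  rw [cmul_eq_sum m hN, mul_eq_sum m hN, ← mulL_apply, ← mulL_apply, map_sum, map_sum]
  apply Finset.sum_congr rfl
  intro n _
  rw [mulL_apply, mulL_apply, mul_poly_smul m hs,
    show m.mul (lam + mu) (mu ^ n • m.coeff n x y) c =
      mu ^ n • m.mul (lam + mu) (m.coeff n x y) c from
        (mulL m (lam + mu) c).map_smul _ _]
  congr 1
  simp only [eval_pow, eval_neg, eval_add, eval_X, eval_C]
  ring

/-- `a ∘_λ b ∈ L_{i+j}` for homogeneous `a, b`. -/
lemma mul_mem {S : SuperModule L} {m : ConformalProduct L}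
    (hm : IsLambdaProduct S m) {i j : ZMod 2} {a b : L}
    (ha : a ∈ S.grade i) (hb : b ∈ S.grade j) (lam : ℂ) :
    m.mul lam a b ∈ S.grade (i + j) := by
  obtain ⟨N, hN⟩ := m.coeff_finite a b
  rw [mul_eq_sum m hN]
  exact Submodule.sum_mem _ fun n _ =>
    Submodule.smul_mem _ _ (hm.even i j a b ha hb n)

lemma sgn_mul_self (i j : ZMod 2) : sgn i j * sgn i j = 1 := by
  unfold sgn
  rw [← pow_add, ← two_mul, pow_mul]
  norm_num

lemma sgn_comm (i j : ZMod 2) : sgn i j = sgn j i := by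
  unfold sgn; rw [Nat.mul_comm]

lemma sgn_key (i j k : ZMod 2) : sgn j k * sgn j (i + k) = sgn i j := by
  have h : ∀ x : ZMod 2, x = 0 ∨ x = 1 := by decide
  rcases h i with hi | hi <;> rcases h j with hj | hj <;> rcases h k with hk | hk <;>
    subst hi <;> subst hj <;> subst hk <;>
    norm_num [sgn, show ((1 : ZMod 2) + 1) = 0 by decide,
      show ((0 : ZMod 2) + 1) = 1 by decide, show ((1 : ZMod 2) + 0) = 1 by decide,
      show ((0 : ZMod 2) + 0) = 0 by decide,
      show (0 : ZMod 2).val = 0 from rfl, show (1 : ZMod 2).val = 1 from rfl,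
      show ZMod.val (2 : ZMod 2) = 0 from rfl]

/-- The super-commutativity of left multiplications:
`a ∘_λ (b ∘_μ c) = (-1)^{|a||b|} b ∘_μ (a ∘_λ c)`. -/
lemma mul_left_comm {S : SuperModule L} {m : ConformalProduct L}
    (hm : IsCommAssoc S m) {i j : ZMod 2} {a b : L}
    (ha : a ∈ S.grade i) (hb : b ∈ S.grade j) (c : L) (lam mu : ℂ) :
    m.mul lam a (m.mul mu b c) = sgn i j • m.mul mu b (m.mul lam a c) := by
  rw [hm.assoc, hm.comm i j a b ha hb lam, ← mulL_apply, map_smul, mulL_apply,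
    mul_cmul m hm.sesq_left, add_comm lam mu, ← hm.assoc]

/-- Extract `cmul` from `comm` using that `sgn` squares to one. -/
lemma cmul_eq_sgn_mul {S : SuperModule L} {m : ConformalProduct L}
    (hm : IsCommAssoc S m) {i j : ZMod 2} {a b : L}
    (ha : a ∈ S.grade i) (hb : b ∈ S.grade j) (lam : ℂ) :
    m.cmul lam b a = sgn i j • m.mul lam a b := by
  rw [hm.comm i j a b ha hb lam, smul_smul, sgn_mul_self, one_smul]

/-- Induction principle over homogeneous elements. -/
lemma homog_induction (S : SuperModule L) {P : L → Prop} (h0 : P 0)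
    (hadd : ∀ x y, P x → P y → P (x + y))
    (hgr : ∀ i, ∀ a ∈ S.grade i, P a) : ∀ a, P a := by
  intro a
  have ha : a ∈ (⊤ : Submodule ℂ L) := trivial
  rw [← S.isInternal.submodule_iSup_eq_top] at ha
  exact Submodule.iSup_induction (motive := P) _ ha hgr h0 hadd

end Aux

/-- if `D` is an even derivation of a commutative associative conformal
superalgebra `(N, ∘_λ)`, then `a ∗_λ b := a ∘_λ D(b)` makes `N` a Novikov conformal
superalgebra and `(N, ∘_λ, ∗_λ)` a Novikov-Poisson conformal superalgebra. -/
theorem statement_12 (S : SuperModule L) (m : ConformalProduct L)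
    (hm : IsCommAssoc S m) (D : L →ₗ[Polynomial ℂ] L)
    (hD_grade : ∀ (i : ZMod 2) (a : L), a ∈ S.grade i → D a ∈ S.grade i)
    (hD_der : ∀ (lam : ℂ) (a b : L),
      D (m.mul lam a b) = m.mul lam (D a) b + m.mul lam a (D b)) :
    ∃ p : ConformalProduct L,
      (∀ (lam : ℂ) (a b : L), p.mul lam a b = m.mul lam a (D b)) ∧
      IsNovikov S p ∧ IsNovikovPoisson S m p := by
  classical
  let p : ConformalProduct L :=
    ⟨fun n => (m.coeff n).compl₂ (LinearMap.restrictScalars ℂ D),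
     fun a b => m.coeff_finite a (D b)⟩
  have hp : ∀ (lam : ℂ) (a b : L), p.mul lam a b = m.mul lam a (D b) := fun _ _ _ => rfl
  have hpc : ∀ (lam : ℂ) (a b : L), p.cmul lam a b = m.cmul lam a (D b) := fun _ _ _ => rfl
  have mul_add_r : ∀ (lam : ℂ) (a x y : L),
      m.mul lam a (x + y) = m.mul lam a x + m.mul lam a y :=
    fun lam a x y => (mulR m lam a).map_add x y
  -- `p` is an even λ-product
  have hlp : IsLambdaProduct S p := by
    constructor
    · intro i j a b ha hb n
      exact hm.even i j a (D b) ha (hD_grade j b hb) n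
    · intro lam a b
      simp only [hp]
      exact hm.sesq_left lam a (D b)
    · intro lam a b
      simp only [hp]
      rw [map_smul D (X : Polynomial ℂ) b]
      exact hm.sesq_right lam a (D b)
  -- left symmetry of `p`
  have hls : ∀ (i j : ZMod 2) (a b : L), a ∈ S.grade i → b ∈ S.grade j →
      ∀ (c : L) (lam mu : ℂ),
      p.mul (lam + mu) (p.mul lam a b) c - p.mul lam a (p.mul mu b c) =
        sgn i j • (p.mul (lam + mu) (p.mul mu b a) c - p.mul mu b (p.mul lam a c)) := by
    intro i j a b ha hb c lam mu
    simp only [hp]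
    rw [hD_der mu b (D c), hD_der lam a (D c),
      ← hm.assoc lam mu a (D b) (D c), add_comm lam mu,
      ← hm.assoc mu lam b (D a) (D c), mul_add_r, mul_add_r,
      mul_left_comm hm ha hb (D (D c)) lam mu]
    simp only [smul_sub, smul_add]
    abel
  -- the Novikov identity for `p`
  have hnov : ∀ (j k : ZMod 2) (b c : L), b ∈ S.grade j → c ∈ S.grade k →
      ∀ (a : L) (lam mu : ℂ),
      p.mul (lam + mu) (p.mul lam a b) c = sgn j k • p.cmul mu (p.mul lam a c) b := by
    intro j k b c hb hc
    have H : ∀ (i : ZMod 2), ∀ a ∈ S.grade i, ∀ lam mu : ℂ,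
        p.mul (lam + mu) (p.mul lam a b) c = sgn j k • p.cmul mu (p.mul lam a c) b := by
      intro i a ha lam mu
      simp only [hp, hpc]
      rw [← hm.assoc lam mu a (D b) (D c),
        mul_left_comm hm ha (hD_grade j b hb) (D c) lam mu,
        cmul_eq_sgn_mul hm (hD_grade j b hb)
          (mul_mem hm.toIsLambdaProduct ha (hD_grade k c hc) lam) mu,
        smul_smul, sgn_key i j k, sgn_comm i j]
    have h0 : ∀ lam mu : ℂ,
        p.mul (lam + mu) (p.mul lam 0 b) c = sgn j k • p.cmul mu (p.mul lam 0 c) b := by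
      intro lam mu
      rw [show p.mul lam 0 b = 0 from (mulL p lam b).map_zero,
        show p.mul lam 0 c = 0 from (mulL p lam c).map_zero,
        show p.mul (lam + mu) 0 c = 0 from (mulL p (lam + mu) c).map_zero,
        show p.cmul mu 0 b = 0 from (cmulL p mu b).map_zero, smul_zero]
    have hadd : ∀ x y : L,
        (∀ lam mu : ℂ, p.mul (lam + mu) (p.mul lam x b) c =
          sgn j k • p.cmul mu (p.mul lam x c) b) →
        (∀ lam mu : ℂ, p.mul (lam + mu) (p.mul lam y b) c =
          sgn j k • p.cmul mu (p.mul lam y c) b) →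
        ∀ lam mu : ℂ, p.mul (lam + mu) (p.mul lam (x + y) b) c =
          sgn j k • p.cmul mu (p.mul lam (x + y) c) b := by
      intro x y hx hy lam mu
      rw [show p.mul lam (x + y) b = p.mul lam x b + p.mul lam y b from
          (mulL p lam b).map_add x y,
        show p.mul lam (x + y) c = p.mul lam x c + p.mul lam y c from
          (mulL p lam c).map_add x y,
        show p.mul (lam + mu) (p.mul lam x b + p.mul lam y b) c =
            p.mul (lam + mu) (p.mul lam x b) c + p.mul (lam + mu) (p.mul lam y b) c from
          (mulL p (lam + mu) c).map_add _ _,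
        show p.cmul mu (p.mul lam x c + p.mul lam y c) b =
            p.cmul mu (p.mul lam x c) b + p.cmul mu (p.mul lam y c) b from
          (cmulL p mu b).map_add _ _,
        hx lam mu, hy lam mu, smul_add]
    intro a
    exact homog_induction S h0 hadd H a
  refine ⟨p, hp, ⟨⟨hlp, hls⟩, hnov⟩, ?_⟩
  refine ⟨hm, ⟨⟨hlp, hls⟩, hnov⟩, ?_, ?_⟩
  · intro lam mu a b c
    simp only [hp]
    exact (hm.assoc lam mu a b (D c)).symm
  · intro i j a b ha hb c lam mu
    simp only [hp]
    rw [hD_der mu b c, hD_der lam a c,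
      ← hm.assoc lam mu a (D b) c, add_comm lam mu,
      ← hm.assoc mu lam b (D a) c, mul_add_r, mul_add_r,
      mul_left_comm hm ha hb (D c) lam mu]
    simp only [smul_sub, smul_add]
    abel
end TPCSAFormal
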